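/- Let K be a field. The polynomial ring K[z, w] in two variables is free as a module over the subring K[zw] generated by the product zw, with basis {1} ∪ {zᵉ, wᵉ : e ≥ 1}. -/

import Mathlib

open MvPolynomial

noncomputable section BasisZW

namespace BasisZW

abbrev Idx := Option (Bool × ℕ+)

def E : Idx → (Fin 2 →₀ ℕ)
  | none => 0
  | some (false, e) => Finsupp.single 0 (e : ℕ)
  | some (true, e) => Finsupp.single 1 (e : ℕ)

def d (n : ℕ) : Fin 2 →₀ ℕ := Finsupp.single 0 n + Finsupp.single 1 n

@[simp] lemma d_apply0 (n : ℕ) : d n 0 = n := by simp [d]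
@[simp] lemma d_apply1 (n : ℕ) : d n 1 = n := by
  simp [d, Finsupp.single_apply]

lemma E_apply0 : ∀ i : Idx, (E i) 0 = match i with
    | none => 0 | some (false, e) => (e : ℕ) | some (true, _) => 0
  | none => rfl
  | some (false, e) => by simp [E]
  | some (true, e) => by simp [E, Finsupp.single_apply]

lemma E_apply1 : ∀ i : Idx, (E i) 1 = match i with
    | none => 0 | some (false, _) => 0 | some (true, e) => (e : ℕ)
  | none => rfl
  | some (false, e) => by simp [E, Finsupp.single_apply]
  | some (true, e) => by simp [E]

lemma inj {m n : ℕ} {i j : Idx} (h : d m + E i = d n + E j) : m = n ∧ i = j := by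
  have h0 : m + (E i) 0 = n + (E j) 0 := by
    have := congrArg (fun f => f 0) h; simpa using this
  have h1 : m + (E i) 1 = n + (E j) 1 := by
    have := congrArg (fun f => f 1) h; simpa using this
  clear h
  rcases i with _ | ⟨_ | _, e⟩ <;> rcases j with _ | ⟨_ | _, f⟩ <;>
      simp [E, Finsupp.single_apply] at h0 h1
  · exact ⟨by omega, rfl⟩
  · exfalso; have hf : 0 < (f : ℕ) := f.2; set fn := (f : ℕ); omega
  · exfalso; have hf : 0 < (f : ℕ) := f.2; set fn := (f : ℕ); omega
  · exfalso; have he : 0 < (e : ℕ) := e.2; set en := (e : ℕ); omega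
  · have hef : e = f := PNat.coe_injective (by
      have he : 0 < (e : ℕ) := e.2; have hf : 0 < (f : ℕ) := f.2; set en := (e : ℕ); set fn := (f : ℕ); omega)
    subst hef; exact ⟨by have he : 0 < (e : ℕ) := e.2; set en := (e : ℕ); omega, rfl⟩
  · exfalso; have he : 0 < (e : ℕ) := e.2; have hf : 0 < (f : ℕ) := f.2; set en := (e : ℕ); set fn := (f : ℕ); omega
  · exfalso; have he : 0 < (e : ℕ) := e.2; set en := (e : ℕ); omega
  · exfalso; have he : 0 < (e : ℕ) := e.2; have hf : 0 < (f : ℕ) := f.2; set en := (e : ℕ); set fn := (f : ℕ); omega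
  · have hef : e = f := PNat.coe_injective (by
      have he : 0 < (e : ℕ) := e.2; have hf : 0 < (f : ℕ) := f.2; set en := (e : ℕ); set fn := (f : ℕ); omega)
    subst hef; exact ⟨by have he : 0 < (e : ℕ) := e.2; set en := (e : ℕ); omega, rfl⟩

lemma surj (v : Fin 2 →₀ ℕ) : ∃ (n : ℕ) (i : Idx), v = d n + E i := by
  set a := v 0 with ha
  set b := v 1 with hb
  have key : ∀ (n : ℕ) (i : Idx), n + E i 0 = a → n + E i 1 = b → v = d n + E i := by
    intro n i h0 h1
    ext x
    fin_cases x
    · simpa using h0.symm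
    · simpa using h1.symm
  rcases lt_trichotomy a b with h | h | h
  · exact ⟨a, some (true, ⟨b - a, by omega⟩), key _ _ (by simp [E_apply0]) (by simp [E_apply1]; omega)⟩
  · exact ⟨a, none, key _ _ (by simp [E_apply0]) (by simp [E_apply1]; omega)⟩
  · exact ⟨b, some (false, ⟨a - b, by omega⟩), key _ _ (by simp [E_apply0]; omega) (by simp [E_apply1])⟩

variable {K : Type*} [Field K]

def B (i : Idx) : MvPolynomial (Fin 2) K := monomial (E i) 1

lemma t_pow (n : ℕ) : (X 0 * X 1 : MvPolynomial (Fin 2) K) ^ n = monomial (d n) 1 := by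
  have h1 : (X 0 * X 1 : MvPolynomial (Fin 2) K) = monomial (d 1) 1 := by
    rw [X, X, monomial_mul]; norm_num [d]
  have h2 : n • d 1 = d n := by
    ext x; rw [Finsupp.smul_apply]; fin_cases x <;> simp
  rw [h1, monomial_pow, h2, one_pow]

lemma coeff_key (p : Polynomial K) (i : Idx) (n : ℕ) (j : Idx) :
    coeff (d n + E j) (Polynomial.aeval (X 0 * X 1 : MvPolynomial (Fin 2) K) p * B i)
      = if i = j then p.coeff n else 0 := by
  induction p using Polynomial.induction_on' with
  | add p q hp hq =>
    rw [map_add, add_mul, coeff_add, hp, hq, Polynomial.coeff_add]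
    split_ifs <;> simp
  | monomial m c =>
    rw [Polynomial.aeval_monomial]
    have : (algebraMap K (MvPolynomial (Fin 2) K)) c * (X 0 * X 1) ^ m * B i
        = monomial (d m + E i) c := by
      rw [t_pow]
      show C c * _ * monomial (E i) 1 = _
      rw [C_apply, monomial_mul, monomial_mul, zero_add, mul_one, mul_one]
    rw [this, coeff_monomial, Polynomial.coeff_monomial]
    by_cases hij : i = j
    · subst hij
      by_cases hmn : m = n
      · subst hmn; simp
      · have : ¬ (d m + E i = d n + E i) := fun h => hmn (inj h).1
        simp [this, hmn]
    · have : ¬ (d m + E i = d n + E j) := fun h => hij (inj h).2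
      simp [this, hij]

end BasisZW

open BasisZW in
/-- K[z,w] is free as a module over the subring K[zw], with basis
{1} ∪ {zᵉ, wᵉ : e ≥ 1}.  Here z = X 0, w = X 1 in MvPolynomial (Fin 2) K, and the
subring is Algebra.adjoin K {z*w}. -/
theorem basis_over_adjoin_zw {K : Type*} [Field K] :
    ∃ b : Module.Basis (Option (Bool × ℕ+))
        (Algebra.adjoin K {(X 0 * X 1 : MvPolynomial (Fin 2) K)})
        (MvPolynomial (Fin 2) K),
      b none = 1 ∧
      (∀ e : ℕ+, b (some (false, e)) = (X 0 : MvPolynomial (Fin 2) K) ^ (e : ℕ)) ∧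
      (∀ e : ℕ+, b (some (true, e)) = (X 1 : MvPolynomial (Fin 2) K) ^ (e : ℕ)) := by
  set t : MvPolynomial (Fin 2) K := X 0 * X 1 with ht
  set R := Algebra.adjoin K {t} with hR
  -- linear independence
  have li : LinearIndependent R (B (K := K)) := by
    rw [linearIndependent_iff]
    intro l hl
    have key : ∀ x : MvPolynomial (Fin 2) K, x ∈ Algebra.adjoin K {t} →
        ∃ q : Polynomial K, Polynomial.aeval t q = x := by
      intro x hx
      rw [Algebra.adjoin_singleton_eq_range_aeval] at hx
      exact hx
    choose p hp using fun i => key _ (l i).2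
    have hsum : ∑ i ∈ l.support, Polynomial.aeval t (p i) * B i = 0 := by
      rw [Finsupp.linearCombination_apply, Finsupp.sum] at hl
      calc ∑ i ∈ l.support, Polynomial.aeval t (p i) * B i
          = ∑ i ∈ l.support, l i • B i := by
            refine Finset.sum_congr rfl fun i _ => ?_
            show _ = (l i : MvPolynomial (Fin 2) K) * B i
            rw [hp i]
        _ = 0 := hl
    refine Finsupp.ext fun j => ?_
    have hcoe : (l j : MvPolynomial (Fin 2) K) = 0 := by
      by_cases hjs : j ∈ l.support
      · have hpj : p j = 0 := by
          ext n
          have hc := congrArg (coeff (d n + E j)) hsum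
          simp only [coeff_sum, coeff_zero] at hc
          rw [Finset.sum_congr rfl (fun i _ => coeff_key (p i) i n j),
            Finset.sum_ite_eq' l.support j (fun i => (p i).coeff n), if_pos hjs] at hc
          simpa using hc
        rw [← hp j, hpj, map_zero]
      · rw [Finsupp.notMem_support_iff.mp hjs]; rfl
    have hz : (0 : Idx →₀ ↥R) j = 0 := rfl
    rw [hz]
    apply Subtype.ext
    exact hcoe
  -- spanning
  have sp : ⊤ ≤ Submodule.span R (Set.range (B (K := K))) := by
    intro q _
    rw [as_sum q]
    refine Submodule.sum_mem _ fun v hv => ?_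
    obtain ⟨n, i, rfl⟩ := surj v
    have hmem : C (coeff (d n + E i) q) * t ^ n ∈ R := by
      refine Subalgebra.mul_mem _ ?_ (Subalgebra.pow_mem _ ?_ n)
      · exact Subalgebra.algebraMap_mem _ _
      · exact Algebra.subset_adjoin rfl
    have : (monomial (d n + E i)) (coeff (d n + E i) q)
        = (⟨C (coeff (d n + E i) q) * t ^ n, hmem⟩ : R) • B i := by
      rw [Algebra.smul_def]
      show _ = C (coeff (d n + E i) q) * t ^ n * B i
      rw [ht, t_pow, C_apply]
      show _ = monomial 0 _ * monomial _ 1 * monomial _ 1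
      rw [monomial_mul, monomial_mul, zero_add, mul_one, mul_one]
    rw [this]
    exact Submodule.smul_mem _ _ (Submodule.subset_span ⟨i, rfl⟩)
  refine ⟨Module.Basis.mk li sp, ?_, ?_, ?_⟩
  · rw [Module.Basis.mk_apply]; show monomial 0 1 = 1; simp
  · intro e; rw [Module.Basis.mk_apply]; show monomial (Finsupp.single 0 (e:ℕ)) 1 = _
    rw [X_pow_eq_monomial]
  · intro e; rw [Module.Basis.mk_apply]; show monomial (Finsupp.single 1 (e:ℕ)) 1 = _
    rw [X_pow_eq_monomial]

end BasisZW
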